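/- Let g be a Lie algebra with subalgebra h and complement m, and let f ∈ S^n(g)^G be a homogeneous degree-n invariant of the adjoint action of a connected group G with Lie algebra g. Write f = Σ_{a ≤ i ≤ b} f^{(n−i,i)} with f^{(n−i,i)} ∈ S^{n−i}(h) ⊗ S^i(m), f^{(n−b,b)} ≠ 0. Then the highest component f^{(n−b,b)}, viewed as an element of S^n(k) for the contraction k = h ⋉ mᵃ, is invariant under the coadjoint action of the corresponding connected group K, i.e., f^{(n−b,b)} ∈ S^n(k)^K = k[k*]^K_n. -/

import Mathlib

open MvPolynomial

section Aux

variable {σ K : Type*} [CommRing K]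

lemma weight_intCast (w : σ → ℕ) (d : σ →₀ ℕ) :
    Finsupp.weight (fun j => (w j : ℤ)) d = ((Finsupp.weight w d : ℕ) : ℤ) := by
  classical
  simp only [Finsupp.weight_apply, Finsupp.sum, smul_eq_mul]
  push_cast
  rfl

lemma whc_intCast (w : σ → ℕ) (c : ℕ) (p : MvPolynomial σ K) :
    weightedHomogeneousComponent (fun j => (w j : ℤ)) (c : ℤ) p
      = weightedHomogeneousComponent w c p := by
  classical
  ext d
  rw [coeff_weightedHomogeneousComponent, coeff_weightedHomogeneousComponent]
  congr 1
  simp [weight_intCast w d, Nat.cast_inj]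

lemma derivation_shift (W : σ → ℤ)
    (D : Derivation K (MvPolynomial σ K) (MvPolynomial σ K)) (d : ℤ)
    (hD : ∀ j, (D (X j)).IsWeightedHomogeneous W (W j + d)) :
    ∀ (p : MvPolynomial σ K) (c : ℤ), p.IsWeightedHomogeneous W c →
      (D p).IsWeightedHomogeneous W (c + d) := by
  classical
  have key : ∀ u : σ →₀ ℕ, (D (monomial u (1 : K))).IsWeightedHomogeneous W
      (Finsupp.weight W u + d) := by
    intro u
    induction u using Finsupp.induction with
    | zero =>
      have h1 : (monomial (0 : σ →₀ ℕ) (1 : K)) = 1 := by simp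
      rw [h1, Derivation.map_one_eq_zero]
      exact isWeightedHomogeneous_zero K W _
    | single_add a n u hau hn ih =>
      have hws : ∀ (c : ℕ), Finsupp.weight W (Finsupp.single a c) = c • W a := by
        intro c
        rw [Finsupp.weight_apply, Finsupp.sum_single_index (zero_smul ℕ (W a))]
      have hsw : Finsupp.weight W (Finsupp.single a n) = n • W a := hws n
      have hw1 : Finsupp.weight W (Finsupp.single a n + u)
          = n • W a + Finsupp.weight W u := by
        rw [map_add, hsw]
      have hXn : (X a ^ n : MvPolynomial σ K).IsWeightedHomogeneous W (n • W a) := by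
        rw [X_pow_eq_monomial]
        exact isWeightedHomogeneous_monomial W _ _ hsw
      have hXn' : (X a ^ (n - 1) : MvPolynomial σ K).IsWeightedHomogeneous W
          ((n - 1) • W a) := by
        rw [X_pow_eq_monomial]
        exact isWeightedHomogeneous_monomial W _ _ (hws (n - 1))
      rw [monomial_single_add, Derivation.leibniz, hw1]
      rw [← mem_weightedHomogeneousSubmodule]
      refine Submodule.add_mem _ ?_ ?_
      · rw [smul_eq_mul, mem_weightedHomogeneousSubmodule]
        have h := hXn.mul ih
        rwa [← add_assoc] at h
      · rw [Derivation.leibniz_pow, smul_comm (monomial u (1 : K)) n]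
        refine nsmul_mem ?_ n
        rw [smul_eq_mul, smul_eq_mul, mem_weightedHomogeneousSubmodule]
        have h := (isWeightedHomogeneous_monomial W u (1 : K) rfl).mul
          (hXn'.mul (hD a))
        convert h using 1
        have hcast : ((n - 1 : ℕ) : ℤ) = (n : ℤ) - 1 := by
          have : 1 ≤ n := Nat.one_le_iff_ne_zero.mpr hn
          push_cast [this]
          ring
        simp only [nsmul_eq_mul, hcast]
        ring
  have keymono : ∀ (u : σ →₀ ℕ) (r : K), (D (monomial u r)).IsWeightedHomogeneous W
      (Finsupp.weight W u + d) := by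
    intro u r
    have h1 : (monomial u r : MvPolynomial σ K) = C r * monomial u 1 := by
      rw [C_mul_monomial, mul_one]
    have h2 : D (C r) = 0 := by
      rw [← MvPolynomial.algebraMap_eq]; exact Derivation.map_algebraMap D r
    rw [h1, Derivation.leibniz, h2, smul_zero, add_zero, smul_eq_mul]
    have h := (isWeightedHomogeneous_C W r).mul (key u)
    rwa [zero_add] at h
  intro p c hp
  rw [p.as_sum, map_sum, ← mem_weightedHomogeneousSubmodule]
  refine Submodule.sum_mem _ fun u hu => ?_
  rw [mem_weightedHomogeneousSubmodule]
  have hu' : Finsupp.weight W u = c := hp (mem_support_iff.mp hu)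
  rw [← hu']
  exact keymono u _

lemma derivation_shift_comm (W : σ → ℤ)
    (D : Derivation K (MvPolynomial σ K) (MvPolynomial σ K)) (d : ℤ)
    (hD : ∀ j, (D (X j)).IsWeightedHomogeneous W (W j + d))
    (c : ℤ) (p : MvPolynomial σ K) :
    weightedHomogeneousComponent W c (D p)
      = D (weightedHomogeneousComponent W (c - d) p) := by
  classical
  conv_lhs => rw [p.as_sum]
  conv_rhs => rw [p.as_sum]
  rw [map_sum, map_sum, map_sum, map_sum]
  refine Finset.sum_congr rfl fun u _ => ?_
  have hmono : (monomial u (coeff u p)).IsWeightedHomogeneous W (Finsupp.weight W u) :=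
    isWeightedHomogeneous_monomial W _ _ rfl
  have hDm := derivation_shift W D d hD _ _ hmono
  by_cases hcase : Finsupp.weight W u = c - d
  · rw [hcase] at hmono hDm
    rw [hmono.weightedHomogeneousComponent_same]
    have : c - d + d = c := by ring
    rw [this] at hDm
    rw [hDm.weightedHomogeneousComponent_same]
  · rw [hmono.weightedHomogeneousComponent_ne _ (fun h => hcase h.symm), map_zero,
      hDm.weightedHomogeneousComponent_ne _ (by intro h; apply hcase; omega)]

end Aux

/-- Let `g = 𝔥 ⊕ m` with `𝔥` a subalgebra, and let
`𝔨 = 𝔥 ⋉ mᵃ` be the Inönü–Wigner contraction, with bracket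
`brq x y = [pH x, pH y] + pM [pH x, pM y] − pM [pH y, pM x]`.
Model the symmetric algebra `S(g) = S(𝔨) = k[g*]` as a polynomial ring in variables
indexed by an adapted basis `e` of `g`; the (infinitesimal) adjoint action of `g`
(resp. coadjoint action of `𝔨`) is by the derivations `Dg x` (resp. `Dq x`) with
`Dg x (X j) = lin ⁅x, e j⁆` (resp. `Dq x (X j) = lin (brq x (e j))`); for a connected
group invariance is equivalent to being killed by these derivations.
If `f ∈ S^n(g)^G` and `f^{(n-b,b)}` is its bi-homogeneous component of highest degree
`b` relative to `m` (taken with the weight `w` which is `0` on `𝔥`-variables and `1`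
on `m`-variables), then `f^{(n-b,b)} ∈ S^n(𝔨)^K = k[𝔨*]^K_n`. -/
theorem statement_3 {k g : Type*} [Field k] [IsAlgClosed k] [CharZero k]
    [LieRing g] [LieAlgebra k g] [FiniteDimensional k g]
    {ιh ιm : Type*} [Fintype ιh] [Fintype ιm] [DecidableEq ιh] [DecidableEq ιm]
    (𝔥 : LieSubalgebra k g) (m : Submodule k g)
    (hc : IsCompl 𝔥.toSubmodule m)
    (e : Module.Basis (ιh ⊕ ιm) k g)
    (he_h : ∀ j, e (Sum.inl j) ∈ 𝔥) (he_m : ∀ j, e (Sum.inr j) ∈ m)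
    (lin : g →ₗ[k] MvPolynomial (ιh ⊕ ιm) k)
    (hlin : ∀ v, lin v = ∑ i, (e.repr v i) • X i)
    (pH pM : g →ₗ[k] g)
    (hpH : ∀ v, pH v = ∑ j : ιh, e.repr v (Sum.inl j) • e (Sum.inl j))
    (hpM : ∀ v, pM v = ∑ j : ιm, e.repr v (Sum.inr j) • e (Sum.inr j))
    (brq : g → g → g)
    (hbrq : ∀ x y, brq x y = ⁅pH x, pH y⁆ + pM ⁅pH x, pM y⁆ - pM ⁅pH y, pM x⁆)
    (Dg Dq : g → Derivation k (MvPolynomial (ιh ⊕ ιm) k) (MvPolynomial (ιh ⊕ ιm) k))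
    (hDg : ∀ x j, Dg x (X j) = lin ⁅x, e j⁆)
    (hDq : ∀ x j, Dq x (X j) = lin (brq x (e j)))
    (w : ιh ⊕ ιm → ℕ) (hw : ∀ j, w (Sum.inl j) = 0) (hw' : ∀ j, w (Sum.inr j) = 1)
    (f : MvPolynomial (ιh ⊕ ιm) k) (n : ℕ) (hf : f.IsHomogeneous n)
    (hfinv : ∀ x : g, Dg x f = 0)
    (b : ℕ) (hb : weightedHomogeneousComponent w b f ≠ 0)
    (htop : ∀ j : ℕ, b < j → weightedHomogeneousComponent w j f = 0) :
    ∀ x : g, Dq x (weightedHomogeneousComponent w b f) = 0 := by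
  classical
  -- basic structure of the projections
  have hsum : ∀ v, pH v + pM v = v := by
    intro v
    rw [hpH v, hpM v, ← Fintype.sum_sum_type (fun i : ιh ⊕ ιm => e.repr v i • e i)]
    exact e.sum_repr v
  have hpH_mem : ∀ v, pH v ∈ 𝔥 := by
    intro v
    rw [hpH v]
    exact 𝔥.toSubmodule.sum_mem fun j _ =>
      Submodule.smul_mem _ _ (by simpa using he_h j)
  have hpM_mem : ∀ v, pM v ∈ m := by
    intro v
    rw [hpM v]
    exact m.sum_mem fun j _ => Submodule.smul_mem _ _ (he_m j)
  have hHzero : ∀ v, v ∈ 𝔥 → pM v = 0 := by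
    intro v hv
    have h1 : pM v = v - pH v := by
      rw [eq_sub_iff_add_eq, add_comm]; exact hsum v
    have h2 : pM v ∈ 𝔥.toSubmodule := by
      rw [h1]
      exact Submodule.sub_mem _ (by simpa using hv) (by simpa using hpH_mem v)
    exact (Submodule.disjoint_def.mp hc.disjoint) _ h2 (hpM_mem v)
  have hMzero : ∀ v, v ∈ m → pH v = 0 := by
    intro v hv
    have h1 : pH v = v - pM v := by
      rw [eq_sub_iff_add_eq]; exact hsum v
    have h2 : pH v ∈ m := by
      rw [h1]; exact Submodule.sub_mem _ hv (hpM_mem v)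
    exact (Submodule.disjoint_def.mp hc.disjoint) _ (by simpa using hpH_mem v) h2
  have hHv : ∀ v, v ∈ 𝔥 → pH v = v := by
    intro v hv
    have := hsum v
    rwa [hHzero v hv, add_zero] at this
  have hMv : ∀ v, v ∈ m → pM v = v := by
    intro v hv
    have := hsum v
    rwa [hMzero v hv, zero_add] at this
  have hHH : ∀ v, pH (pH v) = pH v := fun v => hHv _ (hpH_mem v)
  have hMH : ∀ v, pM (pH v) = 0 := fun v => hHzero _ (hpH_mem v)
  have hHM : ∀ v, pH (pM v) = 0 := fun v => hMzero _ (hpM_mem v)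
  have hMM : ∀ v, pM (pM v) = pM v := fun v => hMv _ (hpM_mem v)
  -- values of lin
  have hlin_e : ∀ i, lin (e i) = X i := by
    intro i
    rw [hlin, ]
    simp [e.repr_self, Finsupp.single_apply, ite_smul]
  have hlinH : ∀ v, (lin (pH v)).IsWeightedHomogeneous (fun i => (w i : ℤ)) 0 := by
    intro v
    rw [hpH v, map_sum, ← mem_weightedHomogeneousSubmodule]
    refine Submodule.sum_mem _ fun j _ => ?_
    rw [map_smul]
    refine Submodule.smul_mem _ _ ?_
    rw [mem_weightedHomogeneousSubmodule, hlin_e]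
    have hX := isWeightedHomogeneous_X k (fun i => (w i : ℤ)) (Sum.inl j : ιh ⊕ ιm)
    simpa [hw j] using hX
  have hlinM : ∀ v, (lin (pM v)).IsWeightedHomogeneous (fun i => (w i : ℤ)) 1 := by
    intro v
    rw [hpM v, map_sum, ← mem_weightedHomogeneousSubmodule]
    refine Submodule.sum_mem _ fun j _ => ?_
    rw [map_smul]
    refine Submodule.smul_mem _ _ ?_
    rw [mem_weightedHomogeneousSubmodule, hlin_e]
    have hX := isWeightedHomogeneous_X k (fun i => (w i : ℤ)) (Sum.inr j : ιh ⊕ ιm)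
    simpa [hw' j] using hX
  have hlin_decomp : ∀ v, lin v = lin (pH v) + lin (pM v) := by
    intro v
    rw [← map_add, hsum v]
  -- additivity of Dq in x
  have hbrq_split : ∀ x y, brq x y = brq (pH x) y + brq (pM x) y := by
    intro x y
    rw [hbrq, hbrq, hbrq, hHH, hMH, hHM, hMM]
    simp only [lie_zero, zero_lie, map_zero, add_zero, sub_zero, zero_add, zero_sub]
    abel
  have hDq_split : ∀ x p, Dq x p = Dq (pH x) p + Dq (pM x) p := by
    intro x p
    have hDeq : Dq x = Dq (pH x) + Dq (pM x) := by
      apply MvPolynomial.derivation_ext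
      intro i
      rw [Derivation.add_apply, hDq, hDq, hDq, hbrq_split x (e i), map_add]
    rw [hDeq, Derivation.add_apply]
  -- main claim for elements of 𝔥
  have main_h : ∀ xh, xh ∈ 𝔥 → Dq xh (weightedHomogeneousComponent w b f) = 0 := by
    intro xh hxh
    have hpHx : pH xh = xh := hHv _ hxh
    have hpMx : pM xh = 0 := hHzero _ hxh
    have hDq0 : ∀ j, ((Dq xh) (X j)).IsWeightedHomogeneous (fun i => (w i : ℤ))
        ((w j : ℤ) + 0) := by
      intro j
      rw [hDq, hbrq, hpHx, hpMx]
      cases j with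
      | inl j =>
        simp only [hHv _ (he_h j), hHzero _ (he_h j), lie_zero, zero_lie, map_zero,
          add_zero, sub_zero]
        have hmem : ⁅xh, e (Sum.inl j)⁆ ∈ 𝔥 := 𝔥.lie_mem hxh (he_h j)
        have h := hlinH ⁅xh, e (Sum.inl j)⁆
        rw [hHv _ hmem] at h
        simpa [hw j] using h
      | inr j =>
        simp only [hMzero _ (he_m j), hMv _ (he_m j), lie_zero, zero_lie, map_zero,
          add_zero, sub_zero, zero_add]
        have h := hlinM ⁅xh, e (Sum.inr j)⁆
        simpa [hw' j] using h
    have hR : ∀ j, ((Dg xh - Dq xh) (X j)).IsWeightedHomogeneous (fun i => (w i : ℤ))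
        ((w j : ℤ) + (-1)) := by
      intro j
      rw [Derivation.sub_apply, hDg, hDq, hbrq, hpHx, hpMx]
      cases j with
      | inl j =>
        simp only [hHv _ (he_h j), hHzero _ (he_h j), lie_zero, zero_lie, map_zero,
          add_zero, sub_zero]
        rw [sub_self]
        exact isWeightedHomogeneous_zero k _ _
      | inr j =>
        simp only [hMzero _ (he_m j), hMv _ (he_m j), lie_zero, zero_lie, map_zero,
          add_zero, sub_zero, zero_add]
        rw [hlin_decomp ⁅xh, e (Sum.inr j)⁆, add_sub_cancel_right]
        have h := hlinH ⁅xh, e (Sum.inr j)⁆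
        have hdeg : ((w (Sum.inr j) : ℤ) + (-1)) = 0 := by simp [hw' j]
        rw [hdeg]
        exact h
    have h0 : weightedHomogeneousComponent (fun i => (w i : ℤ)) (b : ℤ) (Dg xh f) = 0 := by
      rw [hfinv xh, map_zero]
    have hsplit : Dg xh f = Dq xh f + (Dg xh - Dq xh) f := by
      rw [Derivation.sub_apply]; ring
    rw [hsplit, map_add, derivation_shift_comm _ _ 0 hDq0,
      derivation_shift_comm _ _ (-1) hR] at h0
    have e1 : (b : ℤ) - 0 = ((b : ℕ) : ℤ) := by ring
    have e2 : (b : ℤ) - (-1) = (((b + 1 : ℕ)) : ℤ) := by push_cast; ring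
    rw [e1, e2, whc_intCast, whc_intCast, htop (b + 1) (by omega), map_zero,
      add_zero] at h0
    exact h0
  -- main claim for elements of m
  have main_m : ∀ xm, xm ∈ m → Dq xm (weightedHomogeneousComponent w b f) = 0 := by
    intro xm hxm
    have hpHx : pH xm = 0 := hMzero _ hxm
    have hpMx : pM xm = xm := hMv _ hxm
    set A : Derivation k (MvPolynomial (ιh ⊕ ιm) k) (MvPolynomial (ιh ⊕ ιm) k) :=
      MvPolynomial.mkDerivation k (fun i => Sum.elim
        (fun j => lin (pH ⁅xm, e (Sum.inl j)⁆))
        (fun j => lin (pM ⁅xm, e (Sum.inr j)⁆)) i) with hAdef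
    set B : Derivation k (MvPolynomial (ιh ⊕ ιm) k) (MvPolynomial (ιh ⊕ ιm) k) :=
      MvPolynomial.mkDerivation k (fun i => Sum.elim
        (fun _ => (0 : MvPolynomial (ιh ⊕ ιm) k))
        (fun j => lin (pH ⁅xm, e (Sum.inr j)⁆)) i) with hBdef
    have hDqm : ∀ j, Dq xm (X j) =
        Sum.elim (fun j => lin (pM ⁅xm, e (Sum.inl j)⁆)) (fun _ => 0) j := by
      intro j
      rw [hDq, hbrq, hpHx, hpMx]
      cases j with
      | inl j =>
        simp only [hHv _ (he_h j), hHzero _ (he_h j), lie_zero, zero_lie, map_zero,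
          zero_add, zero_sub, Sum.elim_inl]
        rw [← map_neg pM, lie_skew]
      | inr j =>
        simp only [hMzero _ (he_m j), hMv _ (he_m j), lie_zero, zero_lie, map_zero,
          zero_add, sub_zero, zero_sub, neg_zero, Sum.elim_inr]
    have hdecomp : ∀ p, Dg xm p = Dq xm p + A p + B p := by
      intro p
      have hDeq : Dg xm = Dq xm + A + B := by
        apply MvPolynomial.derivation_ext
        intro i
        rw [Derivation.add_apply, Derivation.add_apply, hDg, hDqm, hAdef, hBdef,
          MvPolynomial.mkDerivation_X, MvPolynomial.mkDerivation_X]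
        cases i with
        | inl j =>
          simp only [Sum.elim_inl]
          rw [add_zero, hlin_decomp ⁅xm, e (Sum.inl j)⁆]
          ring
        | inr j =>
          simp only [Sum.elim_inr]
          rw [zero_add, hlin_decomp ⁅xm, e (Sum.inr j)⁆]
          ring
      rw [hDeq, Derivation.add_apply, Derivation.add_apply]
    have hDq1 : ∀ j, ((Dq xm) (X j)).IsWeightedHomogeneous (fun i => (w i : ℤ))
        ((w j : ℤ) + 1) := by
      intro j
      rw [hDqm]
      cases j with
      | inl j =>
        simp only [Sum.elim_inl]
        have h := hlinM ⁅xm, e (Sum.inl j)⁆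
        simpa [hw j] using h
      | inr j =>
        simp only [Sum.elim_inr]
        exact isWeightedHomogeneous_zero k _ _
    have hA0 : ∀ j, (A (X j)).IsWeightedHomogeneous (fun i => (w i : ℤ))
        ((w j : ℤ) + 0) := by
      intro j
      rw [hAdef, MvPolynomial.mkDerivation_X]
      cases j with
      | inl j =>
        simp only [Sum.elim_inl]
        have h := hlinH ⁅xm, e (Sum.inl j)⁆
        simpa [hw j] using h
      | inr j =>
        simp only [Sum.elim_inr]
        have h := hlinM ⁅xm, e (Sum.inr j)⁆
        simpa [hw' j] using h
    have hB1 : ∀ j, (B (X j)).IsWeightedHomogeneous (fun i => (w i : ℤ))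
        ((w j : ℤ) + (-1)) := by
      intro j
      rw [hBdef, MvPolynomial.mkDerivation_X]
      cases j with
      | inl j =>
        simp only [Sum.elim_inl]
        exact isWeightedHomogeneous_zero k _ _
      | inr j =>
        simp only [Sum.elim_inr]
        have h := hlinH ⁅xm, e (Sum.inr j)⁆
        have hdeg : ((w (Sum.inr j) : ℤ) + (-1)) = 0 := by simp [hw' j]
        rw [hdeg]
        exact h
    have h0 : weightedHomogeneousComponent (fun i => (w i : ℤ)) ((b : ℤ) + 1)
        (Dg xm f) = 0 := by
      rw [hfinv xm, map_zero]
    rw [hdecomp f, map_add, map_add, derivation_shift_comm _ _ 1 hDq1,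
      derivation_shift_comm _ _ 0 hA0, derivation_shift_comm _ _ (-1) hB1] at h0
    have e1 : (b : ℤ) + 1 - 1 = ((b : ℕ) : ℤ) := by ring
    have e2 : (b : ℤ) + 1 - 0 = (((b + 1 : ℕ)) : ℤ) := by push_cast; ring
    have e3 : (b : ℤ) + 1 - (-1) = (((b + 2 : ℕ)) : ℤ) := by push_cast; ring
    rw [e1, e2, e3, whc_intCast, whc_intCast, whc_intCast, htop (b + 1) (by omega),
      htop (b + 2) (by omega), map_zero, map_zero, add_zero, add_zero] at h0
    exact h0
  intro x
  rw [hDq_split x, main_h (pH x) (hpH_mem x), main_m (pM x) (hpM_mem x), add_zero]
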